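/- Let χ be a nontrivial additive character of F_q, k ∈ {1,…,d}, j ∈ F_q^*, and let N_k be the set of m ∈ F_q^d with exactly k zero coordinates. Then for all g : F_q^d → ℂ, |⟨g, g ∗ ((dσ_j)^∨ 1_{N_k})⟩| ≤ C(d,k) ‖g‖_{ℓ^2(F_q^d)}^2 for a constant C(d,k) independent of q, where (dσ_j)^∨(m) = (q-1)^{-(d-1)} Σ_{x ∈ H_j} χ(m·x), (g∗h)(m) = Σ_n g(m-n)h(n), and ⟨g,h⟩ = Σ_m g(m) conj(h(m)). -/

import Mathlib

open Finset

lemma addChar_map_sum {F : Type} [AddCommGroup F] {ι : Type} (χ : AddChar F ℂ)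
    (s : Finset ι) (f : ι → F) : χ (∑ i ∈ s, f i) = ∏ i ∈ s, χ (f i) := by
  induction s using Finset.cons_induction with
  | empty => simp
  | cons a s ha ih => rw [Finset.sum_cons, Finset.prod_cons, AddChar.map_add_eq_mul, ih]

lemma charsum_nonzero {F : Type} [Field F] [Fintype F] [DecidableEq F]
    (χ : AddChar F ℂ) (hχ : χ ≠ 1) (a : F) :
    ∑ s ∈ (univ : Finset F) \ {0}, χ (a * s)
      = if a = 0 then ((Fintype.card F : ℂ) - 1) else -1 := by
  have hprim := AddChar.IsPrimitive.of_ne_one hχ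
  have h := AddChar.sum_mulShift a hprim
  have hsplit : ∑ s ∈ (univ : Finset F), χ (s * a)
      = χ (0 * a) + ∑ s ∈ (univ : Finset F) \ {0}, χ (s * a) := by
    rw [← Finset.sum_sdiff (Finset.singleton_subset_iff.mpr (Finset.mem_univ 0)),
      Finset.sum_singleton, add_comm]
  rw [h] at hsplit
  have : ∑ s ∈ (univ : Finset F) \ {0}, χ (a * s)
      = ∑ s ∈ (univ : Finset F) \ {0}, χ (s * a) := by
    exact Finset.sum_congr rfl fun s _ => by rw [mul_comm]
  rw [this]
  by_cases ha : a = 0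
  · simp only [ha, if_pos] at hsplit ⊢
    have := hsplit
    rw [mul_zero, AddChar.map_zero_eq_one] at this
    linear_combination -this
  · simp only [ha, if_neg, if_false] at hsplit ⊢
    rw [zero_mul, AddChar.map_zero_eq_one] at hsplit
    push_cast at hsplit
    linear_combination -hsplit

lemma hypersurface_charsum {d k : ℕ} (hk1 : 1 ≤ k) {F : Type} [Field F] [Fintype F]
    [DecidableEq F] (χ : AddChar F ℂ) (hχ : χ ≠ 1) {j : F} (hj : j ≠ 0)
    {v : Fin d → F} (hv : (univ.filter (fun i => v i = 0)).card = k) :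
    ‖∑ x ∈ univ.filter (fun x : Fin d → F => ∏ i, x i = j),
      χ (∑ i, v i * x i)‖ = ((Fintype.card F : ℝ) - 1) ^ (k - 1) := by
  have hne : (univ.filter (fun i => v i = 0)).Nonempty := by
    rw [← Finset.card_pos, hv]; omega
  obtain ⟨i0, hi0mem⟩ := hne
  have hvi0 : v i0 = 0 := (Finset.mem_filter.mp hi0mem).2
  set t : Fin d → Finset F := fun i => if i = i0 then {1} else univ \ {0} with ht
  have step1 : ∑ x ∈ univ.filter (fun x : Fin d → F => ∏ i, x i = j), χ (∑ i, v i * x i)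
      = ∑ y ∈ Fintype.piFinset t, χ (∑ i, v i * y i) := by
    refine Finset.sum_bij' (fun x _ => Function.update x i0 1)
      (fun y _ => Function.update y i0 (j * (∏ i ∈ univ.erase i0, y i)⁻¹))
      ?_ ?_ ?_ ?_ ?_
    · intro x hx
      have hxp : ∏ i, x i = j := (Finset.mem_filter.mp hx).2
      have hxne : ∀ i, x i ≠ 0 := by
        have := Finset.prod_ne_zero_iff.mp (hxp ▸ hj)
        exact fun i => this i (Finset.mem_univ i)
      rw [Fintype.mem_piFinset]
      intro i
      by_cases hii : i = i0
      · subst hii; simp [ht]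
      · simp [ht, hii, Function.update_of_ne hii, hxne i]
    · intro y hy
      have hy' := Fintype.mem_piFinset.mp hy
      have hyne : ∀ i, i ≠ i0 → y i ≠ 0 := by
        intro i hii
        have := hy' i
        simp [ht, hii] at this
        exact this
      have hPne : (∏ i ∈ univ.erase i0, y i) ≠ 0 :=
        Finset.prod_ne_zero_iff.mpr fun i hi => hyne i (Finset.mem_erase.mp hi).1
      rw [Finset.mem_filter]
      refine ⟨Finset.mem_univ _, ?_⟩
      rw [Finset.prod_update_of_mem (Finset.mem_univ i0), ← Finset.erase_eq]
      field_simp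
    · intro x hx
      have hxp : ∏ i, x i = j := (Finset.mem_filter.mp hx).2
      have hxne : ∀ i, x i ≠ 0 := by
        have := Finset.prod_ne_zero_iff.mp (hxp ▸ hj)
        exact fun i => this i (Finset.mem_univ i)
      have hPne : (∏ i ∈ univ.erase i0, x i) ≠ 0 :=
        Finset.prod_ne_zero_iff.mpr fun i _ => hxne i
      rw [Function.update_idem]
      have hprod : ∏ i ∈ univ.erase i0, Function.update x i0 1 i
          = ∏ i ∈ univ.erase i0, x i :=
        Finset.prod_congr rfl fun i hi => Function.update_of_ne (Finset.mem_erase.mp hi).1 _ _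
      rw [hprod]
      have hxi0 : x i0 * ∏ i ∈ univ.erase i0, x i = j := by
        rw [Finset.mul_prod_erase univ x (Finset.mem_univ i0), hxp]
      have : j * (∏ i ∈ univ.erase i0, x i)⁻¹ = x i0 := by
        field_simp [← hxi0]
        rw [← hxi0, mul_comm]
      rw [this, Function.update_eq_self]
    · intro y hy
      have hy' := Fintype.mem_piFinset.mp hy
      have hy0 : y i0 = 1 := by
        have := hy' i0
        simpa [ht] using this
      rw [Function.update_idem, ← hy0, Function.update_eq_self]
    · intro x hx
      congr 1
      refine Finset.sum_congr rfl fun i _ => ?_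
      by_cases hii : i = i0
      · subst hii; rw [hvi0, zero_mul, zero_mul]
      · rw [Function.update_of_ne hii]
  have step2 : ∑ y ∈ Fintype.piFinset t, χ (∑ i, v i * y i)
      = ∏ i, ∑ s ∈ t i, χ (v i * s) := by
    rw [Finset.prod_univ_sum]
    exact Finset.sum_congr rfl fun y _ => addChar_map_sum χ univ _
  rw [step1, step2, norm_prod]
  have hq1 : (1 : ℝ) ≤ (Fintype.card F : ℝ) := by
    exact_mod_cast Fintype.card_pos
  have hfac : ∀ i, ‖∑ s ∈ t i, χ (v i * s)‖
      = if ¬i = i0 ∧ v i = 0 then ((Fintype.card F : ℝ) - 1) else 1 := by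
    intro i
    by_cases hii : i = i0
    · subst hii
      simp [ht, hvi0]
    · have : t i = univ \ {0} := by simp [ht, hii]
      rw [this, charsum_nonzero χ hχ (v i)]
      by_cases hvi : v i = 0
      · rw [if_pos hvi, if_pos (show ¬i = i0 ∧ v i = 0 from ⟨hii, hvi⟩)]
        have : ((Fintype.card F : ℂ) - 1) = (((Fintype.card F : ℝ) - 1 : ℝ) : ℂ) := by
          push_cast; ring
        rw [this, Complex.norm_of_nonneg (by linarith)]
      · simp [hvi]
  simp_rw [hfac]
  rw [Finset.prod_ite, Finset.prod_const, Finset.prod_const_one, mul_one]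
  congr 1
  have : univ.filter (fun i => ¬i = i0 ∧ v i = 0)
      = (univ.filter fun i => v i = 0).erase i0 := by
    ext i
    simp [Finset.mem_erase, and_comm]
  rw [this, Finset.card_erase_of_mem hi0mem, hv]

lemma card_Nk {d k : ℕ} {F : Type} [Field F] [Fintype F] [DecidableEq F] :
    (univ.filter (fun v : Fin d → F => (univ.filter fun i => v i = 0).card = k)).card
      = d.choose k * (Fintype.card F - 1) ^ (d - k) := by
  rw [Finset.card_eq_sum_card_fiberwise
    (f := fun v : Fin d → F => univ.filter fun i => v i = 0)
    (t := Finset.powersetCard k univ)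
    (fun v hv => Finset.mem_powersetCard_univ.mpr (Finset.mem_filter.mp hv).2)]
  have hfib : ∀ Z ∈ Finset.powersetCard k (univ : Finset (Fin d)),
      ((univ.filter (fun v : Fin d → F => (univ.filter fun i => v i = 0).card = k)).filter
        (fun v => (univ.filter fun i => v i = 0) = Z)).card
      = (Fintype.card F - 1) ^ (d - k) := by
    intro Z hZ
    have hZcard : Z.card = k := Finset.mem_powersetCard_univ.mp hZ
    rw [Finset.filter_filter]
    have hset : (univ.filter fun v : Fin d → F =>
          ((univ.filter fun i => v i = 0).card = k ∧ (univ.filter fun i => v i = 0) = Z))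
        = Fintype.piFinset (fun i => if i ∈ Z then ({0} : Finset F) else univ \ {0}) := by
      ext v
      simp only [Finset.mem_filter, Finset.mem_univ, true_and, Fintype.mem_piFinset]
      constructor
      · rintro ⟨-, hzs⟩ i
        by_cases hv : v i = 0
        · have hiZ : i ∈ Z := by rw [← hzs]; simp [hv]
          simp [hiZ, hv]
        · have hiZ : i ∉ Z := by rw [← hzs]; simp [hv]
          simp [hiZ, hv]
      · intro h
        have hzs : (univ.filter fun i => v i = 0) = Z := by
          ext i
          specialize h i
          by_cases hiZ : i ∈ Z
          · simp only [if_pos hiZ, Finset.mem_singleton] at h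
            simp [hiZ, h]
          · simp only [if_neg hiZ, Finset.mem_sdiff, Finset.mem_singleton] at h
            simp [hiZ, h.2]
        exact ⟨by rw [hzs, hZcard], hzs⟩
    rw [hset, Fintype.card_piFinset]
    have hcard : ∀ i : Fin d, ((if i ∈ Z then ({0} : Finset F) else univ \ {0})).card
        = if i ∈ Z then 1 else Fintype.card F - 1 := by
      intro i
      by_cases hiZ : i ∈ Z
      · simp [hiZ]
      · simp only [if_neg hiZ]
        rw [Finset.card_sdiff_of_subset (Finset.singleton_subset_iff.mpr (Finset.mem_univ 0)),
          Finset.card_singleton, Finset.card_univ]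
    simp_rw [hcard]
    rw [Finset.prod_ite, Finset.prod_const, Finset.prod_const, one_pow, one_mul]
    congr 1
    have h1 : univ.filter (fun i : Fin d => ¬i ∈ Z) = Zᶜ := by
      ext i; simp
    rw [h1, Finset.card_compl, hZcard, Fintype.card_fin]
  rw [Finset.sum_congr rfl hfib, Finset.sum_const, Finset.card_powersetCard,
    Finset.card_univ, Fintype.card_fin, smul_eq_mul]

lemma conv_bound {α : Type} [Fintype α] [DecidableEq α] [AddCommGroup α]
    (g h : α → ℂ) :
    ‖∑ m, g m * (starRingEnd ℂ) (∑ n, g (m - n) * h n)‖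
      ≤ (∑ n, ‖h n‖) * ∑ m, ‖g m‖ ^ 2 := by
  set S : ℝ := ∑ m, ‖g m‖ ^ 2 with hS
  have hS0 : 0 ≤ S := Finset.sum_nonneg fun m _ => sq_nonneg _
  have CS : ∀ n : α, ∑ m, ‖g m‖ * ‖g (m - n)‖ ≤ S := by
    intro n
    have h2 : ∑ m, ‖g (m - n)‖ ^ 2 = S := by
      rw [hS]
      exact Fintype.sum_equiv (Equiv.subRight n) _ _ (fun m => rfl)
    have hcs := Finset.sum_mul_sq_le_sq_mul_sq univ
      (fun m => ‖g m‖) (fun m => ‖g (m - n)‖)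
    rw [h2, hS] at hcs
    have hA0 : 0 ≤ ∑ m, ‖g m‖ * ‖g (m - n)‖ :=
      Finset.sum_nonneg fun m _ => mul_nonneg (norm_nonneg _) (norm_nonneg _)
    nlinarith [hcs, hA0, hS0]
  calc ‖∑ m, g m * (starRingEnd ℂ) (∑ n, g (m - n) * h n)‖
      ≤ ∑ m, ‖g m * (starRingEnd ℂ) (∑ n, g (m - n) * h n)‖ :=
        norm_sum_le _ _
    _ = ∑ m, ‖g m‖ * ‖∑ n, g (m - n) * h n‖ :=
        Finset.sum_congr rfl fun m _ => by rw [norm_mul, Complex.norm_conj]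
    _ ≤ ∑ m, ‖g m‖ * ∑ n, ‖g (m - n)‖ * ‖h n‖ := by
        refine Finset.sum_le_sum fun m _ => mul_le_mul_of_nonneg_left ?_ (norm_nonneg _)
        refine le_trans (norm_sum_le _ _) (le_of_eq ?_)
        exact Finset.sum_congr rfl fun n _ => norm_mul _ _
    _ = ∑ n, ‖h n‖ * ∑ m, ‖g m‖ * ‖g (m - n)‖ := by
        simp_rw [Finset.mul_sum]
        rw [Finset.sum_comm]
        exact Finset.sum_congr rfl fun n _ => Finset.sum_congr rfl fun m _ => by ring
    _ ≤ ∑ n, ‖h n‖ * S :=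
        Finset.sum_le_sum fun n _ => mul_le_mul_of_nonneg_left (CS n) (norm_nonneg _)
    _ = (∑ n, ‖h n‖) * S := (Finset.sum_mul _ _ _).symm

/-- For `1 ≤ k ≤ d`, `|⟨g, g ∗ ((dσ_j)^∨ 1_{N_k})⟩| ≤ C ‖g‖²_{ℓ²}` with a
constant `C = C(d,k)` independent of `q`. -/
theorem inner_conv_Nk_bound (d k : ℕ) (hk1 : 1 ≤ k) (hk2 : k ≤ d) :
    ∃ C : ℝ, 0 < C ∧
      ∀ (F : Type) [Field F] [Fintype F] [DecidableEq F],
        Odd (Fintype.card F) →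
        ∀ (χ : AddChar F ℂ), χ ≠ 1 →
        ∀ j : F, j ≠ 0 →
        ∀ g : (Fin d → F) → ℂ,
          ‖(∑ m : Fin d → F, g m *
              (starRingEnd ℂ) (∑ n : Fin d → F, g (m - n) *
                (Set.indicator {v : Fin d → F |
                    (Finset.univ.filter (fun i : Fin d => v i = 0)).card = k}
                  (fun v => (((Fintype.card F : ℂ) - 1) ^ (d - 1))⁻¹ *
                    ∑ x ∈ Finset.univ.filter (fun x : Fin d → F => ∏ i, x i = j),
                      χ (∑ i, v i * x i)) n)))‖
            ≤ C * ∑ m : Fin d → F, ‖g m‖ ^ 2 := by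
  refine ⟨(d.choose k : ℝ), by exact_mod_cast Nat.choose_pos hk2, ?_⟩
  intro F _ _ _ _hodd χ hχ j hj g
  have hq2 : 2 ≤ Fintype.card F := Fintype.one_lt_card
  have hq1R : (1 : ℝ) ≤ (Fintype.card F : ℝ) - 1 := by
    have : (2 : ℝ) ≤ (Fintype.card F : ℝ) := by exact_mod_cast hq2
    linarith
  have hqpos : (0 : ℝ) < (Fintype.card F : ℝ) - 1 := by linarith
  set ind : (Fin d → F) → ℂ := Set.indicator {v : Fin d → F |
      (Finset.univ.filter (fun i : Fin d => v i = 0)).card = k}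
    (fun v => (((Fintype.card F : ℂ) - 1) ^ (d - 1))⁻¹ *
      ∑ x ∈ Finset.univ.filter (fun x : Fin d → F => ∏ i, x i = j),
        χ (∑ i, v i * x i)) with hind
  refine le_trans (conv_bound g ind) ?_
  have hS0 : 0 ≤ ∑ m : Fin d → F, ‖g m‖ ^ 2 :=
    Finset.sum_nonneg fun m _ => sq_nonneg _
  refine mul_le_mul_of_nonneg_right ?_ hS0
  -- compute the ℓ¹ norm of the kernel
  have habsq : ‖(Fintype.card F : ℂ) - 1‖ = (Fintype.card F : ℝ) - 1 := by
    have : ((Fintype.card F : ℂ) - 1) = (((Fintype.card F : ℝ) - 1 : ℝ) : ℂ) := by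
      push_cast; ring
    rw [this, Complex.norm_of_nonneg (by linarith)]
  have hval : ∀ n ∈ univ.filter (fun v : Fin d → F =>
      (univ.filter fun i : Fin d => v i = 0).card = k),
      ‖ind n‖
        = ((Fintype.card F : ℝ) - 1) ^ (k - 1) * (((Fintype.card F : ℝ) - 1) ^ (d - 1))⁻¹ := by
    intro n hn
    have hnP : (univ.filter fun i : Fin d => n i = 0).card = k := (Finset.mem_filter.mp hn).2
    rw [hind, Set.indicator_of_mem (by exact hnP)]
    rw [norm_mul, norm_inv, norm_pow, habsq,
      hypersurface_charsum hk1 χ hχ hj hnP]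
    ring
  calc ∑ n : Fin d → F, ‖ind n‖
      = ∑ n ∈ univ.filter (fun v : Fin d → F =>
          (univ.filter fun i : Fin d => v i = 0).card = k), ‖ind n‖ := by
        rw [← Finset.sum_filter_add_sum_filter_not univ
          (fun v : Fin d → F => (univ.filter fun i : Fin d => v i = 0).card = k)]
        have : ∑ n ∈ univ.filter (fun v : Fin d → F =>
            ¬(univ.filter fun i : Fin d => v i = 0).card = k), ‖ind n‖ = 0 := by
          refine Finset.sum_eq_zero fun n hn => ?_
          have hnP : ¬(univ.filter fun i : Fin d => n i = 0).card = k :=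
            (Finset.mem_filter.mp hn).2
          rw [hind, Set.indicator_of_notMem (by exact hnP)]
          simp
        rw [this, add_zero]
    _ = (d.choose k * (Fintype.card F - 1) ^ (d - k) : ℕ) *
          (((Fintype.card F : ℝ) - 1) ^ (k - 1) * (((Fintype.card F : ℝ) - 1) ^ (d - 1))⁻¹) := by
        rw [Finset.sum_congr rfl hval, Finset.sum_const, card_Nk, nsmul_eq_mul]
    _ = (d.choose k : ℝ) := by
        have hpow : ((Fintype.card F : ℝ) - 1) ^ (d - k) *
            (((Fintype.card F : ℝ) - 1) ^ (k - 1) *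
              (((Fintype.card F : ℝ) - 1) ^ (d - 1))⁻¹) = 1 := by
          rw [← mul_assoc, ← pow_add, show d - k + (k - 1) = d - 1 from by omega,
            mul_inv_cancel₀ (by positivity)]
        push_cast [Nat.cast_sub (show 1 ≤ Fintype.card F by omega)]
        rw [mul_assoc, hpow, mul_one]
    _ ≤ (d.choose k : ℝ) := le_rfl
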